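/- Let A be a C*-algebra and C a subcone of A⁺ satisfying: if a ∈ C and x ∈ Ã then x*ax ∈ C, and C is hereditary. If C is symmetric, meaning x*x ∈ C implies xx* ∈ C for all x ∈ A, then the linear span of C is a symmetric hereditary ideal (x*x in the span implies xx* in the span). -/

import Mathlib

open scoped NNReal

/-- If the hereditary subcone `C` (closed under conjugation by elements of the
unitization) is symmetric (`x*x ∈ C → xx* ∈ C`), then its linear span is a symmetric ideal:
`x*x` in the span implies `xx*` in the span. -/
theorem stmt1 {A : Type*} [NonUnitalCStarAlgebra A] [PartialOrder A] [StarOrderedRing A]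
    (C : Set A)
    (hCpos : ∀ a ∈ C, 0 ≤ a)
    (hCadd : ∀ a ∈ C, ∀ b ∈ C, a + b ∈ C)
    (hCsmul : ∀ a ∈ C, ∀ r : ℝ≥0, ((r : ℂ) • a) ∈ C)
    (hC1 : ∀ a ∈ C, ∀ x : Unitization ℂ A, ∃ b ∈ C,
      (b : Unitization ℂ A) = star x * (a : Unitization ℂ A) * x)
    (hC2 : ∀ a b : A, 0 ≤ a → a ≤ b → b ∈ C → a ∈ C)
    (hCsym : ∀ x : A, star x * x ∈ C → x * star x ∈ C) :
    ∀ x : A, star x * x ∈ Submodule.span ℂ C → x * star x ∈ Submodule.span ℂ C := by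
  intro x hx
  -- Key: every element of the span is dominated (in the above sense) by an element of C ∪ {0}
  have H : ∀ z ∈ Submodule.span ℂ C, ∃ c : A, (c = 0 ∨ c ∈ C) ∧
      ∀ a : ℂ, a • z + (starRingEnd ℂ a) • star z ≤ ‖a‖ • c := by
    intro z hz
    induction hz using Submodule.span_induction with
    | mem w hw =>
      refine ⟨w + w, Or.inr (hCadd w hw w hw), fun a => ?_⟩
      have hw0 := hCpos w hw
      have hsa : star w = w := IsSelfAdjoint.of_nonneg hw0
      rw [hsa]
      have h1 : a • w + (starRingEnd ℂ a) • w = (2 * a.re : ℝ) • w := by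
        rw [← add_smul]
        have : a + starRingEnd ℂ a = ((2 * a.re : ℝ) : ℂ) := by
          exact_mod_cast Complex.add_conj a
        rw [this, Complex.coe_smul]
      have h2 : ‖a‖ • (w + w) = (2 * ‖a‖ : ℝ) • w := by
        rw [smul_add, ← add_smul]; ring_nf
      rw [h1, h2]
      have h3 : (0 : A) ≤ (2 * ‖a‖ - 2 * a.re) • w := by
        refine smul_nonneg ?_ hw0
        have h4 : a.re ≤ ‖a‖ := by
          exact Complex.re_le_norm a
        linarith
      rw [sub_smul] at h3
      exact sub_nonneg.mp h3
    | zero =>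
      exact ⟨0, Or.inl rfl, fun a => by simp⟩
    | add z₁ z₂ hz₁ hz₂ ih₁ ih₂ =>
      obtain ⟨c₁, hc₁, hle₁⟩ := ih₁
      obtain ⟨c₂, hc₂, hle₂⟩ := ih₂
      refine ⟨c₁ + c₂, ?_, fun a => ?_⟩
      · rcases hc₁ with rfl | hc₁ <;> rcases hc₂ with rfl | hc₂
        · exact Or.inl (by simp)
        · exact Or.inr (by simpa using hc₂)
        · exact Or.inr (by simpa using hc₁)
        · exact Or.inr (hCadd _ hc₁ _ hc₂)
      · have : a • (z₁ + z₂) + (starRingEnd ℂ a) • star (z₁ + z₂) =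
            (a • z₁ + (starRingEnd ℂ a) • star z₁) + (a • z₂ + (starRingEnd ℂ a) • star z₂) := by
          rw [star_add, smul_add, smul_add]; abel
        rw [this, smul_add]
        exact add_le_add (hle₁ a) (hle₂ a)
    | smul b z hz ih =>
      obtain ⟨c, hc, hle⟩ := ih
      refine ⟨(‖b‖₊ : ℂ) • c, ?_, fun a => ?_⟩
      · rcases hc with rfl | hc
        · exact Or.inl (smul_zero _)
        · exact Or.inr (hCsmul c hc ‖b‖₊)
      · have h1 : a • (b • z) + (starRingEnd ℂ a) • star (b • z) =
            (a * b) • z + (starRingEnd ℂ (a * b)) • star z := by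
          rw [star_smul, smul_smul, smul_smul, map_mul, Complex.star_def]
        have h2 : ‖a‖ • ((‖b‖₊ : ℂ) • c) = ‖a * b‖ • c := by
          have : ((‖b‖₊ : ℂ)) • c = (‖b‖ : ℝ) • c := by
            rw [Complex.coe_smul]; norm_cast
          rw [this, smul_smul, norm_mul]
        rw [h1, h2]
        exact hle (a * b)
  obtain ⟨c, hc, hle⟩ := H (star x * x) hx
  have hy0 : (0 : A) ≤ star x * x := star_mul_self_nonneg x
  have hsy : star (star x * x) = star x * x := IsSelfAdjoint.of_nonneg hy0
  have h1 := hle 1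
  rw [hsy] at h1
  simp only [one_smul, map_one, norm_one] at h1
  have hyc : star x * x ≤ c := by
    have h2 : star x * x + 0 ≤ star x * x + star x * x := add_le_add_right hy0 _
    rw [add_zero] at h2
    exact h2.trans h1
  rcases hc with rfl | hc
  · have : star x * x = 0 := le_antisymm hyc hy0
    have hx0 : x = 0 := (CStarRing.star_mul_self_eq_zero_iff x).mp this
    rw [hx0]
    simp only [zero_mul]
    exact Submodule.zero_mem _
  · have hyC : star x * x ∈ C := hC2 _ _ hy0 hyc hc
    exact Submodule.subset_span (hCsym x hyC)
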